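/- Let w be a binary word of length ℓ and let m ≥ 0. For w' ∈ I'(w,m), let S(w') = ((j_1,b_1), …, (j_m,b_m)) be its unique canonical insertion sequence (locations strictly increasing; 000 inserted only before a 1 or at the end; 111 inserted only before a 0 or at the end), and define Λ(w') ⊆ {1, …, 3m+ℓ} to be the set of all locations j_t in S(w') except those locations at which the triple 000 is inserted at the end of the current word. Then the map Λ is injective: if w', w'' ∈ I'(w,m) satisfy Λ(w') = Λ(w''), then w' = w''. -/

import Mathlib

/-- An internal insertion: insert a triple `bbb` at some location of the word. -/
def InternalIns (u v : List Bool) : Prop :=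
  ∃ j ≤ u.length, ∃ b : Bool, v = u.take j ++ [b, b, b] ++ u.drop j

/-- `I' w m` is the set of words obtainable from `w` by `m` internal insertions. -/
def internalInsertionSet (w : List Bool) : ℕ → Set (List Bool)
  | 0 => {w}
  | m + 1 => {v | ∃ u ∈ internalInsertionSet w m, InternalIns u v}

/-- Insert the triple `b b b` at (1-indexed) location `j` of `w`, i.e. between the
first `j-1` letters and the rest. -/
def applyIns (w : List Bool) (p : ℕ × Bool) : List Bool :=
  w.take (p.1 - 1) ++ [p.2, p.2, p.2] ++ w.drop (p.1 - 1)

/-- Apply a sequence of insertions, in order. -/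
def applySeq (w : List Bool) (s : List (ℕ × Bool)) : List Bool :=
  s.foldl applyIns w

/-- A sequence of insertions is canonical: the locations are valid and strictly
increasing, and each triple `bbb` is inserted either at the end of the current
word or before a letter different from `b` (so `000` only before a `1` or at the
end, and `111` only before a `0` or at the end). -/
def CanonicalSeq : List Bool → List (ℕ × Bool) → Prop
  | _, [] => True
  | w, (j, b) :: rest =>
      1 ≤ j ∧ j ≤ w.length + 1 ∧
      (j = w.length + 1 ∨ w.getD (j - 1) false ≠ b) ∧
      (∀ q ∈ rest, j < q.1) ∧
      CanonicalSeq (applyIns w (j, b)) rest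

/-- The location set `Λ` of a sequence of insertions starting from `w`: the set of
all locations of the insertions, except those at which a `000` is inserted at the
end of the current word. -/
def lamSet : List Bool → List (ℕ × Bool) → Finset ℕ
  | _, [] => ∅
  | w, (j, b) :: rest =>
      if b = false ∧ j = w.length + 1 then lamSet (applyIns w (j, b)) rest
      else insert j (lamSet (applyIns w (j, b)) rest)

lemma lamSet_gt (c : ℕ) : ∀ (s : List (ℕ × Bool)) (w : List Bool),
    CanonicalSeq w s → (∀ q ∈ s, c < q.1) → ∀ x ∈ lamSet w s, c < x := by
  intro s
  induction s with
  | nil => intro w _ _ x hx; simp [lamSet] at hx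
  | cons p rest ih =>
    obtain ⟨j, b⟩ := p
    intro w hcan hall x hx
    obtain ⟨_, _, _, hinc, hcan'⟩ := hcan
    simp only [lamSet] at hx
    split at hx
    · exact ih _ hcan' (fun q hq => hall q (List.mem_cons_of_mem _ hq)) x hx
    · rcases Finset.mem_insert.mp hx with h | h
      · have := hall (j, b) List.mem_cons_self; omega
      · exact ih _ hcan' (fun q hq => hall q (List.mem_cons_of_mem _ hq)) x h

lemma canonical_seq_unique : ∀ (s₁ s₂ : List (ℕ × Bool)) (w : List Bool),
    s₁.length = s₂.length → CanonicalSeq w s₁ → CanonicalSeq w s₂ →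
    lamSet w s₁ = lamSet w s₂ → s₁ = s₂ := by
  intro s₁
  induction s₁ with
  | nil =>
    intro s₂ w hlen _ _ _
    exact (List.length_eq_zero_iff.mp hlen.symm).symm
  | cons p r₁ ih =>
    obtain ⟨j, b⟩ := p
    intro s₂ w hlen hc1 hc2 hΛ
    match s₂ with
    | [] => simp at hlen
    | (j', b') :: r₂ =>
      obtain ⟨hj1, hj2, hopt1, hinc1, hcan1⟩ := hc1
      obtain ⟨hj1', hj2', hopt2, hinc2, hcan2⟩ := hc2
      have hlen' : r₁.length = r₂.length := by simpa using hlen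
      have hgt1 := lamSet_gt j r₁ (applyIns w (j, b)) hcan1 hinc1
      have hgt2 := lamSet_gt j' r₂ (applyIns w (j', b')) hcan2 hinc2
      by_cases hsup1 : b = false ∧ j = w.length + 1
      · by_cases hsup2 : b' = false ∧ j' = w.length + 1
        · obtain ⟨hb, hje⟩ := id hsup1
          obtain ⟨hb', hje'⟩ := id hsup2
          simp only [lamSet, if_pos hsup1, if_pos hsup2] at hΛ
          have hjj : j = j' := by omega
          have hbb : b = b' := hb.trans hb'.symm
          subst hjj; subst hbb
          rw [ih r₂ (applyIns w (j, b)) hlen' hcan1 hcan2 hΛ]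
        · exfalso
          have hj'mem : j' ∈ lamSet w ((j, b) :: r₁) := by
            rw [hΛ]; simp only [lamSet, if_neg hsup2]
            exact Finset.mem_insert_self _ _
          simp only [lamSet, if_pos hsup1] at hj'mem
          have := hgt1 j' hj'mem
          omega
      · by_cases hsup2 : b' = false ∧ j' = w.length + 1
        · exfalso
          have hjmem : j ∈ lamSet w ((j', b') :: r₂) := by
            rw [← hΛ]; simp only [lamSet, if_neg hsup1]
            exact Finset.mem_insert_self _ _
          simp only [lamSet, if_pos hsup2] at hjmem
          have := hgt2 j hjmem
          omega
        · -- neither suppressed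
          simp only [lamSet, if_neg hsup1, if_neg hsup2] at hΛ
          have hjmem : j ∈ insert j' (lamSet (applyIns w (j', b')) r₂) := by
            rw [← hΛ]; exact Finset.mem_insert_self _ _
          have hj'mem : j' ∈ insert j (lamSet (applyIns w (j, b)) r₁) := by
            rw [hΛ]; exact Finset.mem_insert_self _ _
          have hjj : j = j' := by
            rcases Finset.mem_insert.mp hjmem with h | h
            · exact h
            · rcases Finset.mem_insert.mp hj'mem with h' | h'
              · exact h'.symm
              · have := hgt2 j h
                have := hgt1 j' h'
                omega
          subst hjj
          have hbb : b = b' := by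
            by_cases hje : j = w.length + 1
            · have h1 : b = true := by
                cases b
                · exact absurd ⟨rfl, hje⟩ hsup1
                · rfl
              have h2 : b' = true := by
                cases b'
                · exact absurd ⟨rfl, hje⟩ hsup2
                · rfl
              rw [h1, h2]
            · have h1 : w.getD (j - 1) false ≠ b := hopt1.resolve_left hje
              have h2 : w.getD (j - 1) false ≠ b' := hopt2.resolve_left hje
              cases hg : w.getD (j - 1) false <;> rw [hg] at h1 h2 <;>
                cases b <;> cases b' <;> simp_all
          subst hbb
          have hnot1 : j ∉ lamSet (applyIns w (j, b)) r₁ := fun h =>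
            absurd (hgt1 j h) (lt_irrefl j)
          have hnot2 : j ∉ lamSet (applyIns w (j, b)) r₂ := fun h =>
            absurd (hgt2 j h) (lt_irrefl j)
          have hT : lamSet (applyIns w (j, b)) r₁ = lamSet (applyIns w (j, b)) r₂ := by
            have := congrArg (fun t => Finset.erase t j) hΛ
            simpa [Finset.erase_insert hnot1, Finset.erase_insert hnot2] using this
          rw [ih r₂ (applyIns w (j, b)) hlen' hcan1 hcan2 hT]

/-- The location map `Λ` is injective on `I'(w,m)`: two words of `I'(w,m)` whose
canonical insertion sequences have the same location set are equal. -/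
theorem location_map_injective (w : List Bool) (m : ℕ) (w₁ w₂ : List Bool)
    (h₁ : w₁ ∈ internalInsertionSet w m) (h₂ : w₂ ∈ internalInsertionSet w m)
    (s₁ s₂ : List (ℕ × Bool))
    (hs₁len : s₁.length = m) (hs₁can : CanonicalSeq w s₁)
    (hs₁app : applySeq w s₁ = w₁)
    (hs₂len : s₂.length = m) (hs₂can : CanonicalSeq w s₂)
    (hs₂app : applySeq w s₂ = w₂)
    (hΛ : lamSet w s₁ = lamSet w s₂) :
    w₁ = w₂ := by
  have hs : s₁ = s₂ :=
    canonical_seq_unique s₁ s₂ w (by rw [hs₁len, hs₂len]) hs₁can hs₂can hΛ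
  rw [← hs₁app, ← hs₂app, hs]
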